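/- arXiv:2304.12060 — 4 statements merged into one kernel-verified Lean document; each statement's English description precedes it below -/
import Mathlib

section
/- Let n ≥ 2, τ ∈ ℝ and f ∈ C⁰(closure of ℝⁿ₊). Suppose that for every λ > 0, every x ∈ ∂ℝⁿ₊ and every y ∈ ℝⁿ₊ with |y − x| ≥ λ one has (λ/|y−x|)^τ · f( x + λ²(y−x)/|y−x|² ) ≤ f(y). Then f(y', y_n) = f(0', y_n) for all y = (y', y_n) ∈ ℝⁿ₊; that is, f depends only on the last coordinate y_n. -/
open Real Filter Topology

private lemma aux_ms (n : ℕ) (τ : ℝ) (i : Fin n)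
    (f : EuclideanSpace ℝ (Fin n) → ℝ)
    (hf : ContinuousOn f {x | 0 ≤ x i})
    (h : ∀ lam : ℝ, 0 < lam → ∀ x : EuclideanSpace ℝ (Fin n), x i = 0 →
      ∀ y : EuclideanSpace ℝ (Fin n), 0 < y i → lam ≤ ‖y - x‖ →
        (lam / ‖y - x‖) ^ τ * f (x + (lam ^ 2 / ‖y - x‖ ^ 2) • (y - x)) ≤ f y)
    (a b : EuclideanSpace ℝ (Fin n)) (ha : 0 < a i) (hab : a i = b i) :
    f b ≤ f a := by
  set t := a i with ht
  set e : EuclideanSpace ℝ (Fin n) := EuclideanSpace.single i 1 with he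
  have hei : e i = 1 := by simp [he]
  have key : ∀ s : ℝ, 1 < s →
      Real.sqrt (1 - 1/s) ^ τ * f (b - (t/s) • e) ≤ f a := by
    intro s hs
    have hs0 : (0:ℝ) < s := by linarith
    have hs' : (0:ℝ) < 1 - 1/s := by
      rw [sub_pos, div_lt_one hs0]; exact hs
    set x : EuclideanSpace ℝ (Fin n) := a + s • (b - a) - t • e with hx
    have hxi : x i = 0 := by
      simp [hx, hei, ← hab, ← ht]
    have hax : a - x = t • e - s • (b - a) := by
      rw [hx]; module
    have haxi : (a - x) i = t := by
      rw [hax]; simp [hei, ← hab, ← ht]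
    have hax0 : a - x ≠ 0 := by
      intro h0
      rw [h0] at haxi
      simp at haxi
      exact absurd haxi.symm (ne_of_gt ha)
    have hnorm : 0 < ‖a - x‖ := norm_pos_iff.mpr hax0
    set lam := ‖a - x‖ * Real.sqrt (1 - 1/s) with hlamdef
    have hsqrt_pos : 0 < Real.sqrt (1 - 1/s) := Real.sqrt_pos.mpr hs'
    have hsqrt_le : Real.sqrt (1 - 1/s) ≤ 1 := by
      have h1s : (0:ℝ) < 1/s := one_div_pos.mpr hs0
      calc Real.sqrt (1 - 1/s) ≤ Real.sqrt 1 := Real.sqrt_le_sqrt (by linarith)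
      _ = 1 := Real.sqrt_one
    have hlam_pos : 0 < lam := mul_pos hnorm hsqrt_pos
    have hlam_le : lam ≤ ‖a - x‖ := by
      calc lam ≤ ‖a - x‖ * 1 := mul_le_mul_of_nonneg_left hsqrt_le hnorm.le
      _ = ‖a - x‖ := mul_one _
    have H := h lam hlam_pos x hxi a ha hlam_le
    have hscalar : lam ^ 2 / ‖a - x‖ ^ 2 = 1 - 1/s := by
      rw [hlamdef, mul_pow, Real.sq_sqrt hs'.le]
      field_simp
    have himg : x + (lam ^ 2 / ‖a - x‖ ^ 2) • (a - x) = b - (t/s) • e := by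
      rw [hscalar, hax, hx]
      match_scalars <;> field_simp <;> ring
    have hdiv : lam / ‖a - x‖ = Real.sqrt (1 - 1/s) := by
      rw [hlamdef, mul_comm, mul_div_assoc, div_self hnorm.ne', mul_one]
    rw [hdiv, himg] at H
    exact H
  have hb0 : (0:ℝ) ≤ b i := by rw [← hab]; exact ha.le
  have h1 : Tendsto (fun s : ℝ => Real.sqrt (1 - 1/s) ^ τ) atTop (𝓝 1) := by
    have h0 : Tendsto (fun s : ℝ => 1 - 1/s) atTop (𝓝 1) := by
      have := tendsto_inv_atTop_zero (𝕜 := ℝ)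
      simpa [one_div] using tendsto_const_nhds.sub this
    have hsq : Tendsto (fun s : ℝ => Real.sqrt (1 - 1/s)) atTop (𝓝 1) := by
      have := (Real.continuous_sqrt.tendsto 1).comp h0
      simpa [Function.comp_def] using this
    have := hsq.rpow_const (p := τ) (Or.inl one_ne_zero)
    simpa using this
  have h2 : Tendsto (fun s : ℝ => f (b - (t/s) • e)) atTop (𝓝 (f b)) := by
    have hp : Tendsto (fun s : ℝ => b - (t/s) • e) atTop (𝓝[{x | 0 ≤ x i}] b) := by
      rw [tendsto_nhdsWithin_iff]
      constructor
      · have hts : Tendsto (fun s : ℝ => t/s) atTop (𝓝 0) :=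
          tendsto_const_nhds.div_atTop tendsto_id
        have := hts.smul_const e
        simpa using tendsto_const_nhds.sub this
      · filter_upwards [eventually_ge_atTop 1] with s hs1
        have hc : (b - (t/s) • e) i = b i - t/s * 1 := by
          simp [hei]
        show 0 ≤ (b - (t/s) • e) i
        rw [hc, ← hab]
        have : t/s ≤ t := div_le_self ha.le hs1
        linarith
    exact ((hf b hb0).tendsto).comp hp
  have hlim := h1.mul h2
  refine le_of_tendsto (by simpa using hlim) ?_
  filter_upwards [eventually_gt_atTop 1] with s hs
  simpa [one_div] using key s hs

/-- Moving-spheres lemma in the half space: if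
`(λ/|y-x|)^τ f(x + λ²(y-x)/|y-x|²) ≤ f(y)` for all `λ > 0`, all boundary points
`x` and all `y` in the upper half space with `|y-x| ≥ λ`, then `f` depends only
on the last coordinate (indexed by `i`). -/
theorem moving_spheres_halfspace
    (n : ℕ) (hn : 2 ≤ n) (τ : ℝ)
    (i : Fin n) (hi : (i : ℕ) = n - 1)
    (f : EuclideanSpace ℝ (Fin n) → ℝ)
    (hf : ContinuousOn f {x | 0 ≤ x i})
    (h : ∀ lam : ℝ, 0 < lam → ∀ x : EuclideanSpace ℝ (Fin n), x i = 0 →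
      ∀ y : EuclideanSpace ℝ (Fin n), 0 < y i → lam ≤ ‖y - x‖ →
        (lam / ‖y - x‖) ^ τ * f (x + (lam ^ 2 / ‖y - x‖ ^ 2) • (y - x)) ≤ f y) :
    ∀ y : EuclideanSpace ℝ (Fin n), 0 < y i →
      f y = f (EuclideanSpace.single i (y i)) := by
  intro y hy
  have h1 : f (EuclideanSpace.single i (y i)) ≤ f y :=
    aux_ms n τ i f hf h y _ hy (by simp)
  have h2 : f y ≤ f (EuclideanSpace.single i (y i)) :=
    aux_ms n τ i f hf h _ y (by simpa) (by simp)
  linarith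
end

section
/- Let α ≤ −2. Then there exists no convex function u ∈ C²(ℝ²₊) ∩ C(closure of ℝ²₊) satisfying det D²u = y^α in the open upper half plane ℝ²₊ with boundary value u(x,0) = x²/2 for all x ∈ ℝ. -/
open Real

/-- Partial derivative in the `x`-direction. -/
noncomputable def pdx (u : ℝ × ℝ → ℝ) (p : ℝ × ℝ) : ℝ := fderiv ℝ u p (1, 0)

/-- Partial derivative in the `y`-direction. -/
noncomputable def pdy (u : ℝ × ℝ → ℝ) (p : ℝ × ℝ) : ℝ := fderiv ℝ u p (0, 1)

/-- Determinant of the Hessian: `u_xx u_yy - u_xy ^ 2`. -/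
noncomputable def detD2 (u : ℝ × ℝ → ℝ) (p : ℝ × ℝ) : ℝ :=
  pdx (pdx u) p * pdy (pdy u) p - (pdy (pdx u) p) ^ 2

open Set MeasureTheory Filter


/-- Derivative of the horizontal slice. -/
lemma sliceX_hasDerivAt {w : ℝ × ℝ → ℝ} {x y : ℝ} (h : DifferentiableAt ℝ w (x, y)) :
    HasDerivAt (fun s => w (s, y)) (fderiv ℝ w (x, y) (1, 0)) x := by
  have hg : HasDerivAt (fun s : ℝ => (s, y)) ((1 : ℝ), (0 : ℝ)) x :=
    (hasDerivAt_id x).prodMk (hasDerivAt_const x y)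
  simpa [Function.comp_def] using (h.hasFDerivAt.comp_hasDerivAt x hg)

lemma sliceY_hasDerivAt {w : ℝ × ℝ → ℝ} {x y : ℝ} (h : DifferentiableAt ℝ w (x, y)) :
    HasDerivAt (fun t => w (x, t)) (fderiv ℝ w (x, y) (0, 1)) y := by
  have hg : HasDerivAt (fun t : ℝ => (x, t)) ((0 : ℝ), (1 : ℝ)) y :=
    (hasDerivAt_const y x).prodMk (hasDerivAt_id y)
  simpa [Function.comp_def] using (h.hasFDerivAt.comp_hasDerivAt y hg)

/-- A differentiable convex function lies above its tangent planes. -/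
lemma tangent_le {u : ℝ × ℝ → ℝ} {S : Set (ℝ × ℝ)} (hconv : ConvexOn ℝ S u)
    {p q : ℝ × ℝ} (hp : p ∈ S) (hq : q ∈ S) (hd : DifferentiableAt ℝ u p) :
    fderiv ℝ u p (q - p) ≤ u q - u p := by
  have h0 : p + (0 : ℝ) • (q - p) = p := by simp
  have hline : HasDerivAt (fun t : ℝ => p + t • (q - p)) (q - p) 0 := by
    simpa using ((hasDerivAt_id (0 : ℝ)).smul_const (q - p)).const_add p
  have hg : HasDerivAt (fun t : ℝ => u (p + t • (q - p))) (fderiv ℝ u p (q - p)) 0 := by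
    have hd' : HasFDerivAt u (fderiv ℝ u p) ((fun t : ℝ => p + t • (q - p)) 0) := by
      simpa [h0] using hd.hasFDerivAt
    simpa [Function.comp_def] using hd'.comp_hasDerivAt 0 hline
  -- slope bound
  have hslope : ∀ᶠ t in nhdsWithin (0:ℝ) (Ioi 0),
      slope (fun t : ℝ => u (p + t • (q - p))) 0 t ≤ u q - u p := by
    filter_upwards [Ioo_mem_nhdsGT (by norm_num : (0:ℝ) < 1)]
      with t ht
    have ht0 : 0 < t := ht.1
    have ht1 : t < 1 := ht.2
    have hcvx : u (p + t • (q - p)) ≤ (1 - t) * u p + t * u q := by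
      have heq : p + t • (q - p) = (1 - t) • p + t • q := by
        module
      rw [heq]
      exact hconv.2 hp hq (by linarith) (le_of_lt ht0) (by ring)
    have : slope (fun t : ℝ => u (p + t • (q - p))) 0 t
        = (u (p + t • (q - p)) - u p) / t := by
      simp [slope_def_field, h0]
    rw [this, div_le_iff₀ ht0]
    nlinarith
  have htends : Tendsto (slope (fun t : ℝ => u (p + t • (q - p))) 0)
      (nhdsWithin (0:ℝ) (Ioi 0)) (nhds (fderiv ℝ u p (q - p))) := by
    refine (hasDerivAt_iff_tendsto_slope.1 hg).mono_left ?_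
    exact nhdsWithin_mono 0 fun t ht => ne_of_gt ht
  exact le_of_tendsto htends hslope

/-- If `f` has nonnegative slopes just to the right of `t`, its derivative there
is nonnegative. -/
lemma deriv_nonneg_of_right_mono {f : ℝ → ℝ} {d t : ℝ} (hf : HasDerivAt f d t)
    (h : ∀ s ∈ Ioo t (t + 1), f t ≤ f s) : 0 ≤ d := by
  have hslope : ∀ᶠ s in nhdsWithin t (Ioi t), 0 ≤ slope f t s := by
    filter_upwards [Ioo_mem_nhdsGT (by linarith : t < t + 1)]
      with s hs
    have hst : 0 < s - t := by linarith [hs.1]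
    have := h s hs
    rw [slope_def_field]
    exact div_nonneg (by linarith) (le_of_lt hst)
  have htends : Tendsto (slope f t) (nhdsWithin t (Ioi t)) (nhds d) := by
    refine (hasDerivAt_iff_tendsto_slope.1 hf).mono_left ?_
    exact nhdsWithin_mono t fun s hs => ne_of_gt hs
  exact ge_of_tendsto htends hslope



lemma integral_Icc_eq_intervalIntegral {f : ℝ → ℝ} {a b : ℝ} (hab : a ≤ b) :
    ∫ x in Icc a b, f x = ∫ x in a..b, f x := by
  rw [intervalIntegral.integral_of_le hab, integral_Icc_eq_integral_Ioc]


/-- For `α ≤ -2` there is no convex solution of `det D²u = y^α` in the upper half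
plane, continuous up to the boundary, with boundary value `u(x,0) = x²/2`. -/
theorem no_solution_alpha_le_neg_two (α : ℝ) (hα : α ≤ -2) :
    ¬ ∃ u : ℝ × ℝ → ℝ,
        ContDiffOn ℝ 2 u {p : ℝ × ℝ | 0 < p.2} ∧
        ContinuousOn u {p : ℝ × ℝ | 0 ≤ p.2} ∧
        ConvexOn ℝ {p : ℝ × ℝ | 0 ≤ p.2} u ∧
        (∀ p : ℝ × ℝ, 0 < p.2 → detD2 u p = p.2 ^ α) ∧
        (∀ x : ℝ, u (x, 0) = x ^ 2 / 2) := by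
  rintro ⟨u, hC2, hcont, hconv, hpde, hbd⟩
  have hS : IsOpen {p : ℝ × ℝ | 0 < p.2} := isOpen_lt continuous_const continuous_snd
  have hSsub : {p : ℝ × ℝ | 0 < p.2} ⊆ {p : ℝ × ℝ | 0 ≤ p.2} := fun p hp => (le_of_lt hp : (0:ℝ) ≤ p.2)
  have hdiff : ∀ p ∈ {p : ℝ × ℝ | 0 < p.2}, DifferentiableAt ℝ u p := fun p hp =>
    (hC2.differentiableOn (by norm_num)).differentiableAt (hS.mem_nhds hp)
  have hv1 : ContDiffOn ℝ 1 (fun p => fderiv ℝ u p) {p : ℝ × ℝ | 0 < p.2} :=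
    hC2.fderiv_of_isOpen hS (by norm_num)
  have hpdx1 : ContDiffOn ℝ 1 (pdx u) {p : ℝ × ℝ | 0 < p.2} := by
    unfold pdx; exact hv1.clm_apply contDiffOn_const
  have hpdy1 : ContDiffOn ℝ 1 (pdy u) {p : ℝ × ℝ | 0 < p.2} := by
    unfold pdy; exact hv1.clm_apply contDiffOn_const
  have hdx : ∀ p ∈ {p : ℝ × ℝ | 0 < p.2}, DifferentiableAt ℝ (pdx u) p := fun p hp =>
    (hpdx1.differentiableOn one_ne_zero).differentiableAt (hS.mem_nhds hp)
  have hdy : ∀ p ∈ {p : ℝ × ℝ | 0 < p.2}, DifferentiableAt ℝ (pdy u) p := fun p hp =>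
    (hpdy1.differentiableOn one_ne_zero).differentiableAt (hS.mem_nhds hp)
  have hxxc : ContinuousOn (pdx (pdx u)) {p : ℝ × ℝ | 0 < p.2} := by
    have h0 : ContDiffOn ℝ 0 (fun p => fderiv ℝ (pdx u) p) {p : ℝ × ℝ | 0 < p.2} :=
      hpdx1.fderiv_of_isOpen hS (by norm_num)
    exact (h0.clm_apply contDiffOn_const).continuousOn
  have hyyc : ContinuousOn (pdy (pdy u)) {p : ℝ × ℝ | 0 < p.2} := by
    have h0 : ContDiffOn ℝ 0 (fun p => fderiv ℝ (pdy u) p) {p : ℝ × ℝ | 0 < p.2} :=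
      hpdy1.fderiv_of_isOpen hS (by norm_num)
    exact (h0.clm_apply contDiffOn_const).continuousOn
  have hpdyc : ContinuousOn (pdy u) {p : ℝ × ℝ | 0 < p.2} := hpdy1.continuousOn
  -- slice derivatives
  have hAx : ∀ x y : ℝ, 0 < y →
      HasDerivAt (fun s => pdx u (s, y)) (pdx (pdx u) (x, y)) x := fun x y hy =>
    sliceX_hasDerivAt (hdx (x, y) hy)
  have hAy : ∀ x y : ℝ, 0 < y →
      HasDerivAt (fun t => pdy u (x, t)) (pdy (pdy u) (x, y)) y := fun x y hy =>
    sliceY_hasDerivAt (hdy (x, y) hy)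
  -- gradient monotonicity in each direction
  have hmonox : ∀ x x' y : ℝ, 0 < y → x ≤ x' → pdx u (x, y) ≤ pdx u (x', y) := by
    intro x x' y hy hxx
    rcases eq_or_lt_of_le hxx with rfl | hlt
    · exact le_refl _
    · have hp : ((x, y) : ℝ × ℝ) ∈ {p : ℝ × ℝ | 0 < p.2} := hy
      have hq : ((x', y) : ℝ × ℝ) ∈ {p : ℝ × ℝ | 0 < p.2} := hy
      have h1 := tangent_le hconv (hSsub hp) (hSsub hq) (hdiff _ hp)
      have h2 := tangent_le hconv (hSsub hq) (hSsub hp) (hdiff _ hq)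
      have hd1 : ((x', y) : ℝ × ℝ) - (x, y) = (x' - x) • ((1:ℝ), (0:ℝ)) := by
        simp [Prod.ext_iff]
      have hd2 : ((x, y) : ℝ × ℝ) - (x', y) = (x - x') • ((1:ℝ), (0:ℝ)) := by
        simp [Prod.ext_iff]
      rw [hd1, (fderiv ℝ u _).map_smul] at h1
      rw [hd2, (fderiv ℝ u _).map_smul] at h2
      simp only [smul_eq_mul] at h1 h2
      have hxd : 0 < x' - x := by linarith
      unfold pdx
      nlinarith
  have hmonoy : ∀ x y y' : ℝ, 0 < y → y ≤ y' → pdy u (x, y) ≤ pdy u (x, y') := by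
    intro x y y' hy hyy
    rcases eq_or_lt_of_le hyy with rfl | hlt
    · exact le_refl _
    · have hp : ((x, y) : ℝ × ℝ) ∈ {p : ℝ × ℝ | 0 < p.2} := hy
      have hq : ((x, y') : ℝ × ℝ) ∈ {p : ℝ × ℝ | 0 < p.2} := lt_trans hy hlt
      have h1 := tangent_le hconv (hSsub hp) (hSsub hq) (hdiff _ hp)
      have h2 := tangent_le hconv (hSsub hq) (hSsub hp) (hdiff _ hq)
      have hd1 : ((x, y') : ℝ × ℝ) - (x, y) = (y' - y) • ((0:ℝ), (1:ℝ)) := by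
        simp [Prod.ext_iff]
      have hd2 : ((x, y) : ℝ × ℝ) - (x, y') = (y - y') • ((0:ℝ), (1:ℝ)) := by
        simp [Prod.ext_iff]
      rw [hd1, (fderiv ℝ u _).map_smul] at h1
      rw [hd2, (fderiv ℝ u _).map_smul] at h2
      simp only [smul_eq_mul] at h1 h2
      have hyd : 0 < y' - y := by linarith
      unfold pdy
      nlinarith
  -- nonnegativity of pure second derivatives
  have hxx0 : ∀ x y : ℝ, 0 < y → 0 ≤ pdx (pdx u) (x, y) := by
    intro x y hy
    exact deriv_nonneg_of_right_mono (hAx x y hy)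
      (fun s hs => hmonox x s y hy (le_of_lt hs.1))
  have hyy0 : ∀ x y : ℝ, 0 < y → 0 ≤ pdy (pdy u) (x, y) := by
    intro x y hy
    exact deriv_nonneg_of_right_mono (hAy x y hy)
      (fun s hs => hmonoy x y s hy (le_of_lt hs.1))
  -- PDE consequences
  have hprod : ∀ x y : ℝ, 0 < y →
      y ^ α ≤ pdx (pdx u) (x, y) * pdy (pdy u) (x, y) := by
    intro x y hy
    have h := hpde (x, y) hy
    unfold detD2 at h
    nlinarith [sq_nonneg (pdy (pdx u) (x, y))]
  have hxxpos : ∀ x y : ℝ, 0 < y → 0 < pdx (pdx u) (x, y) := by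
    intro x y hy
    rcases (hxx0 x y hy).lt_or_eq with h | h
    · exact h
    · exfalso
      have h4 : (0:ℝ) < y ^ α := rpow_pos_of_pos hy α
      have := hprod x y hy
      rw [← h] at this
      simp at this
      linarith
  -- the global bound M
  obtain ⟨M, hM⟩ := IsCompact.exists_bound_of_continuousOn
    (isCompact_Icc.prod isCompact_Icc : IsCompact (Icc (-2:ℝ) 2 ×ˢ Icc (0:ℝ) 2))
    (hcont.mono (fun p hp => hp.2.1))
  have habs : ∀ p : ℝ × ℝ, p.1 ∈ Icc (-2:ℝ) 2 → p.2 ∈ Icc (0:ℝ) 2 → |u p| ≤ M := by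
    intro p h1 h2
    have := hM p ⟨h1, h2⟩
    simpa [Real.norm_eq_abs] using this
  have hM0 : 0 ≤ M := le_trans (abs_nonneg _) (habs (0, 0) (by norm_num) (by norm_num))
  set K0 : ℝ := 4 * M + 1 with hK0def
  have hK0pos : 0 < K0 := by simp only [hK0def]; linarith
  -- bounds on pdx u at x = ±1
  have hux1 : ∀ y : ℝ, 0 < y → y ≤ 2 → pdx u (1, y) ≤ 2 * M := by
    intro y hy hy2
    have hp : ((1, y) : ℝ × ℝ) ∈ {p : ℝ × ℝ | 0 < p.2} := hy
    have hq : ((2, y) : ℝ × ℝ) ∈ {p : ℝ × ℝ | 0 ≤ p.2} := le_of_lt hy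
    have h1 := tangent_le hconv (hSsub hp) hq (hdiff _ hp)
    have hd1 : ((2, y) : ℝ × ℝ) - (1, y) = ((1:ℝ), (0:ℝ)) := by simp [Prod.ext_iff]; norm_num
    rw [hd1] at h1
    have ha1 := habs (2, y) (by norm_num) ⟨le_of_lt hy, hy2⟩
    have ha2 := habs (1, y) (by norm_num) ⟨le_of_lt hy, hy2⟩
    unfold pdx
    rw [abs_le] at ha1 ha2
    linarith [h1]
  have hux2 : ∀ y : ℝ, 0 < y → y ≤ 2 → -(2 * M) ≤ pdx u (-1, y) := by
    intro y hy hy2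
    have hp : ((-1, y) : ℝ × ℝ) ∈ {p : ℝ × ℝ | 0 < p.2} := hy
    have hq : ((-2, y) : ℝ × ℝ) ∈ {p : ℝ × ℝ | 0 ≤ p.2} := le_of_lt hy
    have h1 := tangent_le hconv (hSsub hp) hq (hdiff _ hp)
    have hd1 : ((-2, y) : ℝ × ℝ) - (-1, y) = -((1:ℝ), (0:ℝ)) := by
      simp [Prod.ext_iff]; norm_num
    rw [hd1, (fderiv ℝ u _).map_neg] at h1
    have ha1 := habs (-2, y) (by norm_num) ⟨le_of_lt hy, hy2⟩
    have ha2 := habs (-1, y) (by norm_num) ⟨le_of_lt hy, hy2⟩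
    rw [abs_le] at ha1 ha2
    unfold pdx
    linarith [h1]
  -- lower bound on pdy u in terms of boundary values
  have hpdy_lb : ∀ x y : ℝ, 0 < y → (u (x, y) - u (x, 0)) / y ≤ pdy u (x, y) := by
    intro x y hy
    have hp : ((x, y) : ℝ × ℝ) ∈ {p : ℝ × ℝ | 0 < p.2} := hy
    have hq : ((x, 0) : ℝ × ℝ) ∈ {p : ℝ × ℝ | 0 ≤ p.2} := le_refl (0:ℝ)
    have h1 := tangent_le hconv (hSsub hp) hq (hdiff _ hp)
    have hd1 : ((x, 0) : ℝ × ℝ) - (x, y) = (-y) • ((0:ℝ), (1:ℝ)) := by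
      simp [Prod.ext_iff]
    rw [hd1, (fderiv ℝ u _).map_smul] at h1
    simp only [smul_eq_mul] at h1
    rw [div_le_iff₀ hy]
    unfold pdy
    nlinarith
  -- slice continuity helpers
  have hsliceX : ∀ {g : ℝ × ℝ → ℝ}, ContinuousOn g {p : ℝ × ℝ | 0 < p.2} →
      ∀ {y : ℝ}, 0 < y → ∀ s : Set ℝ, ContinuousOn (fun x => g (x, y)) s := by
    intro g hg y hy s
    have : ContinuousOn (fun x : ℝ => g (x, y)) univ :=
      hg.comp ((continuous_id.prodMk continuous_const).continuousOn)
        (fun x _ => hy)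
    exact this.mono (subset_univ s)
  have hsliceY : ∀ {g : ℝ × ℝ → ℝ}, ContinuousOn g {p : ℝ × ℝ | 0 < p.2} →
      ∀ x : ℝ, ∀ s : Set ℝ, s ⊆ Ioi 0 → ContinuousOn (fun t => g (x, t)) s := by
    intro g hg x s hs
    exact hg.comp ((continuous_const.prodMk continuous_id).continuousOn)
      (fun t ht => hs ht)
  -- FTC in x
  have hxint : ∀ y : ℝ, 0 < y → IntervalIntegrable (fun x => pdx (pdx u) (x, y)) volume (-1) 1 :=
    fun y hy => (hsliceX hxxc hy _).intervalIntegrable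
  have hFTCx : ∀ y : ℝ, 0 < y →
      ∫ x in Icc (-1:ℝ) 1, pdx (pdx u) (x, y) = pdx u (1, y) - pdx u (-1, y) := by
    intro y hy
    rw [integral_Icc_eq_intervalIntegral (by norm_num : (-1:ℝ) ≤ 1)]
    exact intervalIntegral.integral_eq_sub_of_hasDerivAt (fun x _ => hAx x y hy) (hxint y hy)
  -- pointwise lower bound on u_yy
  have hpt : ∀ x y : ℝ, 0 < y → y ≤ 1 →
      1 / y ^ 2 * (2 / K0) - 1 / y ^ 2 / K0 ^ 2 * pdx (pdx u) (x, y) ≤ pdy (pdy u) (x, y) := by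
    intro x y hy hy1
    set a := pdx (pdx u) (x, y) with hadef
    set b := pdy (pdy u) (x, y) with hbdef
    have ha : 0 < a := hxxpos x y hy
    have hb : 0 ≤ b := hyy0 x y hy
    have h2 : y ^ (-2:ℝ) ≤ y ^ α := rpow_le_rpow_of_exponent_ge hy hy1 hα
    have h3 : y ^ (-2:ℝ) = 1 / y ^ 2 := by
      rw [show (-2:ℝ) = -((2:ℕ):ℝ) by norm_num, rpow_neg hy.le, rpow_natCast, one_div]
    have h4 : 1 / y ^ 2 ≤ a * b := le_trans (h3 ▸ h2) (hprod x y hy)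
    have hy2 : (0:ℝ) < y ^ 2 := by positivity
    have h5 : 2 / K0 - a / K0 ^ 2 ≤ 1 / a := by
      rw [div_sub_div _ _ (ne_of_gt hK0pos) (by positivity), div_le_div_iff₀ (by positivity) ha]
      nlinarith [mul_nonneg hK0pos.le (sq_nonneg (a - K0))]
    have h7 : 1 / y ^ 2 * (1 / a) ≤ b := by
      rw [div_mul_div_comm, one_mul, div_le_iff₀ (by positivity)]
      have h8 := (div_le_iff₀ hy2).1 h4
      nlinarith
    calc 1 / y ^ 2 * (2 / K0) - 1 / y ^ 2 / K0 ^ 2 * a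
        = 1 / y ^ 2 * (2 / K0 - a / K0 ^ 2) := by ring
      _ ≤ 1 / y ^ 2 * (1 / a) := mul_le_mul_of_nonneg_left h5 (by positivity)
      _ ≤ b := h7
  -- integral lower bound for fixed height y
  have hIy : ∀ y : ℝ, 0 < y → y ≤ 1 →
      3 / K0 * (1 / y ^ 2) ≤ ∫ x in Icc (-1:ℝ) 1, pdy (pdy u) (x, y) := by
    intro y hy hy1
    have h1y : (0:ℝ) < 1 / y ^ 2 := by positivity
    have hgint : IntegrableOn (fun x => pdx (pdx u) (x, y)) (Icc (-1:ℝ) 1) volume :=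
      ContinuousOn.integrableOn_compact isCompact_Icc (hsliceX hxxc hy _)
    have hintL : IntegrableOn
        (fun x => 1 / y ^ 2 * (2 / K0) - 1 / y ^ 2 / K0 ^ 2 * pdx (pdx u) (x, y))
        (Icc (-1:ℝ) 1) volume :=
      (integrableOn_const measure_Icc_lt_top.ne).sub (hgint.const_mul _)
    have hintR : IntegrableOn (fun x => pdy (pdy u) (x, y)) (Icc (-1:ℝ) 1) volume :=
      ContinuousOn.integrableOn_compact isCompact_Icc (hsliceX hyyc hy _)
    have hmono := setIntegral_mono_on hintL hintR measurableSet_Icc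
      (fun x _ => hpt x y hy hy1)
    have hmeas : (volume (Icc (-1:ℝ) 1)).toReal = 2 := by
      rw [Real.volume_Icc]
      rw [ENNReal.toReal_ofReal (by norm_num)]
      norm_num
    have hcalc : ∫ x in Icc (-1:ℝ) 1,
        (1 / y ^ 2 * (2 / K0) - 1 / y ^ 2 / K0 ^ 2 * pdx (pdx u) (x, y))
        = 1 / y ^ 2 * (2 / K0) * 2 - 1 / y ^ 2 / K0 ^ 2 * (pdx u (1, y) - pdx u (-1, y)) := by
      rw [integral_sub (integrableOn_const measure_Icc_lt_top.ne :
          Integrable (fun _ : ℝ => 1 / y ^ 2 * (2 / K0)) (volume.restrict (Icc (-1:ℝ) 1))) (hgint.const_mul _),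
        setIntegral_const, MeasureTheory.integral_const_mul, hFTCx y hy, measureReal_def, hmeas]
      simp only [smul_eq_mul]
      ring
    set d := pdx u (1, y) - pdx u (-1, y) with hddef
    have hd : d ≤ 4 * M := by
      have := hux1 y hy (by linarith)
      have := hux2 y hy (by linarith)
      simp only [hddef]
      linarith
    have e2 : d / K0 ^ 2 ≤ 1 / K0 := by
      rw [div_le_div_iff₀ (by positivity) hK0pos]
      nlinarith
    calc 3 / K0 * (1 / y ^ 2) = 1 / y ^ 2 * (4 / K0 - 1 / K0) := by ring
      _ ≤ 1 / y ^ 2 * (4 / K0 - d / K0 ^ 2) := by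
          apply mul_le_mul_of_nonneg_left _ h1y.le
          linarith
      _ = 1 / y ^ 2 * (2 / K0) * 2 - 1 / y ^ 2 / K0 ^ 2 * d := by ring
      _ ≤ ∫ x in Icc (-1:ℝ) 1, pdy (pdy u) (x, y) := by rw [← hcalc]; exact hmono
  -- main integral inequality via Fubini
  have hmain : ∀ y : ℝ, 0 < y → y ≤ 1 →
      3 / K0 * (1 / y - 1) ≤
        (∫ x in Icc (-1:ℝ) 1, pdy u (x, 1)) - ∫ x in Icc (-1:ℝ) 1, pdy u (x, y) := by
    intro y hy hy1
    have hABsub : ∀ q : ℝ × ℝ, q ∈ Icc (-1:ℝ) 1 ×ˢ Icc y 1 → q ∈ {p : ℝ × ℝ | 0 < p.2} :=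
      fun q hq => lt_of_lt_of_le hy hq.2.1
    have hfc : ContinuousOn (pdy (pdy u)) (Icc (-1:ℝ) 1 ×ˢ Icc y 1) := hyyc.mono hABsub
    have hfi : IntegrableOn (pdy (pdy u)) (Icc (-1:ℝ) 1 ×ˢ Icc y 1) volume :=
      ContinuousOn.integrableOn_compact (isCompact_Icc.prod isCompact_Icc) hfc
    have hfi' : Integrable (Function.uncurry fun x t => pdy (pdy u) (x, t))
        ((volume.restrict (Icc (-1:ℝ) 1)).prod (volume.restrict (Icc y 1))) := by
      rw [Measure.prod_restrict, ← Measure.volume_eq_prod]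
      exact hfi
    have hswap := MeasureTheory.integral_integral_swap hfi'
    have hinner : ∀ x : ℝ, (∫ t in Icc y 1, pdy (pdy u) (x, t))
        = pdy u (x, 1) - pdy u (x, y) := by
      intro x
      rw [integral_Icc_eq_intervalIntegral hy1]
      apply intervalIntegral.integral_eq_sub_of_hasDerivAt (f := fun t => pdy u (x, t))
      · intro t ht
        rw [uIcc_of_le hy1] at ht
        exact hAy x t (lt_of_lt_of_le hy ht.1)
      · apply ContinuousOn.intervalIntegrable
        rw [uIcc_of_le hy1]
        exact hsliceY hyyc x _ (fun t ht => lt_of_lt_of_le hy ht.1)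
    have hL : (∫ x in Icc (-1:ℝ) 1, (pdy u (x, 1) - pdy u (x, y)))
        = ∫ t in Icc y 1, ∫ x in Icc (-1:ℝ) 1, pdy (pdy u) (x, t) := by
      rw [← hswap]
      exact (setIntegral_congr_fun measurableSet_Icc (fun x _ => (hinner x).symm) :)
    have hg2int : IntegrableOn (fun t => ∫ x in Icc (-1:ℝ) 1, pdy (pdy u) (x, t))
        (Icc y 1) volume := hfi'.integral_prod_right
    have hg1int : IntegrableOn (fun t => 3 / K0 * (1 / t ^ 2)) (Icc y 1) volume := by
      apply ContinuousOn.integrableOn_compact isCompact_Icc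
      apply continuousOn_const.mul
      apply continuousOn_const.div (continuousOn_id.pow 2)
      intro t ht
      have ht0 : 0 < t := lt_of_lt_of_le hy ht.1
      exact pow_ne_zero 2 ht0.ne'
    have hmono2 := setIntegral_mono_on hg1int hg2int measurableSet_Icc
      (fun t ht => hIy t (lt_of_lt_of_le hy ht.1) ht.2)
    have hcomp : (∫ t in Icc y 1, 3 / K0 * (1 / t ^ 2)) = 3 / K0 * (1 / y - 1) := by
      rw [integral_Icc_eq_intervalIntegral hy1, intervalIntegral.integral_const_mul]
      have hFTC : ∫ t in y..(1:ℝ), 1 / t ^ 2 = -(1:ℝ)⁻¹ - -y⁻¹ := by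
        apply intervalIntegral.integral_eq_sub_of_hasDerivAt
          (f := fun t : ℝ => -t⁻¹)
        · intro t ht
          rw [uIcc_of_le hy1] at ht
          have ht0 : t ≠ 0 := ne_of_gt (lt_of_lt_of_le hy ht.1)
          have := (hasDerivAt_inv ht0).neg
          simpa [one_div, Pi.neg_def] using this
        · apply ContinuousOn.intervalIntegrable
          rw [uIcc_of_le hy1]
          apply continuousOn_const.div (continuousOn_id.pow 2)
          intro t ht
          have ht0 : 0 < t := lt_of_lt_of_le hy ht.1
          exact pow_ne_zero 2 ht0.ne'
      rw [hFTC]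
      have hyne : y ≠ 0 := ne_of_gt hy
      field_simp
      ring
    have hsub : (∫ x in Icc (-1:ℝ) 1, (pdy u (x, 1) - pdy u (x, y)))
        = (∫ x in Icc (-1:ℝ) 1, pdy u (x, 1)) - ∫ x in Icc (-1:ℝ) 1, pdy u (x, y) := by
      apply integral_sub
      · exact ContinuousOn.integrableOn_compact isCompact_Icc (hsliceX hpdyc one_pos _)
      · exact ContinuousOn.integrableOn_compact isCompact_Icc (hsliceX hpdyc hy _)
    calc 3 / K0 * (1 / y - 1) = ∫ t in Icc y 1, 3 / K0 * (1 / t ^ 2) := hcomp.symm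
      _ ≤ ∫ t in Icc y 1, ∫ x in Icc (-1:ℝ) 1, pdy (pdy u) (x, t) := hmono2
      _ = ∫ x in Icc (-1:ℝ) 1, (pdy u (x, 1) - pdy u (x, y)) := hL.symm
      _ = _ := hsub
  -- endgame
  set c : ℝ := 3 / K0 with hcdef
  have hcpos : 0 < c := by positivity
  set W1 : ℝ := ∫ x in Icc (-1:ℝ) 1, pdy u (x, 1) with hW1def
  have hUC : UniformContinuousOn u (Icc (-1:ℝ) 1 ×ˢ Icc (0:ℝ) 1) :=
    (isCompact_Icc.prod isCompact_Icc).uniformContinuousOn_of_continuous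
      (hcont.mono (fun p hp => hp.2.1))
  obtain ⟨δ, hδpos, hδ⟩ := (Metric.uniformContinuousOn_iff).1 hUC (c/8) (by positivity)
  set T : ℝ := (3 * c / 4) / (|W1| + c + 1) with hTdef
  have hTpos : 0 < T := by positivity
  set y : ℝ := min (δ/2) (min (1/2) (T/2)) with hydef
  have hypos : 0 < y := by positivity
  have hy1 : y ≤ 1 := le_trans (min_le_right _ _) (le_trans (min_le_left _ _) (by norm_num))
  have hyδ : y < δ := lt_of_le_of_lt (min_le_left _ _) (by linarith)
  have hyT : y ≤ T/2 := le_trans (min_le_right _ _) (min_le_right _ _)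
  have hosc : ∀ x ∈ Icc (-1:ℝ) 1, -(c/8) ≤ u (x, y) - u (x, 0) := by
    intro x hx
    have h1 : ((x, y) : ℝ × ℝ) ∈ Icc (-1:ℝ) 1 ×ˢ Icc (0:ℝ) 1 := ⟨hx, ⟨hypos.le, hy1⟩⟩
    have h2 : ((x, 0) : ℝ × ℝ) ∈ Icc (-1:ℝ) 1 ×ˢ Icc (0:ℝ) 1 :=
      ⟨hx, ⟨le_refl (0:ℝ), by norm_num⟩⟩
    have hdlt : dist ((x, y) : ℝ × ℝ) (x, 0) < δ := by
      rw [Prod.dist_eq]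
      simp only [Real.dist_eq, sub_self, abs_zero, sub_zero]
      rw [max_eq_right (abs_nonneg y), abs_of_pos hypos]
      exact hyδ
    have h3 := hδ _ h1 _ h2 hdlt
    rw [Real.dist_eq] at h3
    have h4 := (abs_lt.1 h3).1
    linarith
  have hWy_lb : -(c/8)/y * 2 ≤ ∫ x in Icc (-1:ℝ) 1, pdy u (x, y) := by
    have hint1 : IntegrableOn (fun x => pdy u (x, y)) (Icc (-1:ℝ) 1) volume :=
      ContinuousOn.integrableOn_compact isCompact_Icc (hsliceX hpdyc hypos _)
    have hpw : ∀ x ∈ Icc (-1:ℝ) 1, -(c/8)/y ≤ pdy u (x, y) := by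
      intro x hx
      have hlb := hpdy_lb x y hypos
      have hub := (div_le_div_iff_of_pos_right hypos).2 (hosc x hx)
      exact le_trans hub hlb
    have h := setIntegral_mono_on
      (integrableOn_const measure_Icc_lt_top.ne) hint1 measurableSet_Icc hpw
    have hmeas : (volume (Icc (-1:ℝ) 1)).toReal = 2 := by
      rw [Real.volume_Icc, ENNReal.toReal_ofReal (by norm_num)]
      norm_num
    rw [setIntegral_const, measureReal_def, hmeas, smul_eq_mul] at h
    linarith
  have hmainy := hmain y hypos hy1
  -- combine
  have hq : (3*c/4)/y ≤ |W1| + c := by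
    have hy' : (0:ℝ) < y := hypos
    have e1 : c * (1 / y - 1) = c/y - c := by ring
    have e2 : -(c/8)/y*2 = -(c/4)/y := by ring
    have e3 : (3*c/4)/y = c/y - (c/4)/y := by ring
    have habs1 : W1 ≤ |W1| := le_abs_self W1
    rw [e1] at hmainy
    rw [e2] at hWy_lb
    rw [e3]
    have : -(c/4)/y = -((c/4)/y) := by ring
    linarith [hmainy, hWy_lb, neg_div c 4]
  have hq2 : (3*c/4)/(T/2) ≤ (3*c/4)/y :=
    div_le_div_of_nonneg_left (by positivity) hypos hyT
  have hq3 : (3*c/4)/(T/2) = 2*(|W1| + c + 1) := by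
    rw [hTdef]
    have h1 : |W1| + c + 1 ≠ 0 := by positivity
    field_simp
  have habs0 : (0:ℝ) ≤ |W1| := abs_nonneg _
  rw [hq3] at hq2
  linarith
end

section
/- Let a ≥ 0, b > 0 and α ∈ ℝ. Let Ω ⊂ ℝ² be an open subset of the upper half plane {y > 0} and let u ∈ C²(Ω) be a uniformly convex solution of det D²u = (a + b y)^α in Ω. Then its partial Legendre transform u*(ξ,η) = x u_x(x,y) − u(x,y), with (ξ,η) = (u_x(x,y), y), satisfies the Grushin-type equation (a + b η)^α u*_{ξξ} + u*_{ηη} = 0 on P(Ω), where P(x,y) = (u_x(x,y), y). -/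
open Real

private lemma two_decomp (L : (ℝ×ℝ) →L[ℝ] ℝ) (v : ℝ×ℝ) :
    L v = v.1 * L (1,0) + v.2 * L (0,1) := by
  have hv : v = v.1 • ((1:ℝ),(0:ℝ)) + v.2 • ((0:ℝ),(1:ℝ)) := by simp [Prod.ext_iff]
  conv_lhs => rw [hv, map_add, map_smul, map_smul]
  simp [smul_eq_mul]

/-- The partial Legendre transform `u*(ξ,η) = x u_x - u`, `(ξ,η) = (u_x(x,y), y)`,
of a `C²` uniformly convex solution of `det D²u = (a + b y)^α` on an open subset
`Ω` of the upper half plane satisfies the Grushin-type equation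
`(a + b η)^α u*_{ξξ} + u*_{ηη} = 0` on `P(Ω)`. -/
theorem partial_legendre_grushin
    (a b α : ℝ) (ha : 0 ≤ a) (hb : 0 < b)
    (Ω : Set (ℝ × ℝ)) (hΩ : IsOpen Ω) (hΩ' : Ω ⊆ {p : ℝ × ℝ | 0 < p.2})
    (u ustar : ℝ × ℝ → ℝ)
    (hu : ContDiffOn ℝ 2 u Ω)
    (hconv : ∀ p ∈ Ω, ∀ v : ℝ × ℝ, v ≠ 0 →
      0 < fderiv ℝ (fun q => fderiv ℝ u q v) p v)
    (heq : ∀ p ∈ Ω, detD2 u p = (a + b * p.2) ^ α)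
    (hstar : ∀ p ∈ Ω, ustar (pdx u p, p.2) = p.1 * pdx u p - u p) :
    ∀ p ∈ Ω,
      (a + b * p.2) ^ α * pdx (pdx ustar) (pdx u p, p.2)
        + pdy (pdy ustar) (pdx u p, p.2) = 0 := by
  classical
  intro p₀ hp₀
  have hmem : Ω ∈ nhds p₀ := hΩ.mem_nhds hp₀
  have hu2 : ContDiffAt ℝ 2 u p₀ := hu.contDiffAt hmem
  set L1 : ((ℝ×ℝ) →L[ℝ] ℝ) →L[ℝ] ℝ := ContinuousLinearMap.apply ℝ ℝ ((1:ℝ),(0:ℝ)) with hL1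
  set L2 : ((ℝ×ℝ) →L[ℝ] ℝ) →L[ℝ] ℝ := ContinuousLinearMap.apply ℝ ℝ ((0:ℝ),(1:ℝ)) with hL2
  have hfc' : ContDiffAt ℝ 1 (fderiv ℝ u) p₀ := hu2.fderiv_right (by norm_num)
  have hdu : DifferentiableAt ℝ (fderiv ℝ u) p₀ := hfc'.differentiableAt one_ne_zero
  set H : (ℝ×ℝ) →L[ℝ] (ℝ×ℝ) →L[ℝ] ℝ := fderiv ℝ (fderiv ℝ u) p₀ with hH_def
  have hH : HasFDerivAt (fderiv ℝ u) H p₀ := hdu.hasFDerivAt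
  have hfd : HasFDerivAt (fun p => fderiv ℝ u p ((1:ℝ),(0:ℝ))) (L1.comp H) p₀ :=
    L1.hasFDerivAt.comp p₀ hH
  have hgd : HasFDerivAt (fun p => fderiv ℝ u p ((0:ℝ),(1:ℝ))) (L2.comp H) p₀ :=
    L2.hasFDerivAt.comp p₀ hH
  -- symmetry of second derivative
  have hev : ∀ᶠ y in nhds p₀, HasFDerivAt u (fderiv ℝ u y) y := by
    filter_upwards [hmem] with y hy
    exact ((hu.contDiffAt (hΩ.mem_nhds hy)).differentiableAt (by norm_num)).hasFDerivAt
  have hsymm : ∀ v w : ℝ×ℝ, H v w = H w v := fun v w =>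
    second_derivative_symmetric_of_eventually hev hH v w
  set c : ℝ := H (1,0) (1,0) with hc_def
  set m : ℝ := H (0,1) (1,0) with hm_def
  set w : ℝ := H (0,1) (0,1) with hw_def
  have hcpos : 0 < c := by
    have h := hconv p₀ hp₀ (1,0) (by simp [Prod.ext_iff])
    rwa [hfd.fderiv] at h
  have hcne : c ≠ 0 := ne_of_gt hcpos
  -- second-derivative values of u
  have hxx : pdx (pdx u) p₀ = c := by
    show fderiv ℝ (fun p => fderiv ℝ u p ((1:ℝ),(0:ℝ))) p₀ (1,0) = c
    rw [hfd.fderiv]; rfl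
  have hxy : pdy (pdx u) p₀ = m := by
    show fderiv ℝ (fun p => fderiv ℝ u p ((1:ℝ),(0:ℝ))) p₀ (0,1) = m
    rw [hfd.fderiv]; rfl
  have hyy : pdy (pdy u) p₀ = w := by
    show fderiv ℝ (fun p => fderiv ℝ u p ((0:ℝ),(1:ℝ))) p₀ (0,1) = w
    rw [hgd.fderiv]; rfl
  have hdet : c * w - m^2 = (a + b * p₀.2)^α := by
    rw [← heq p₀ hp₀]; rw [detD2, hxx, hyy, hxy]
  -- the map P and its derivative A with inverse B
  set K1 : (ℝ×ℝ) →L[ℝ] ℝ := L1.comp H with hK1_def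
  set K2 : (ℝ×ℝ) →L[ℝ] ℝ := L2.comp H with hK2_def
  have hK1v : ∀ v : ℝ×ℝ, K1 v = v.1 * c + v.2 * m := fun v => two_decomp K1 v
  have hK2v : ∀ v : ℝ×ℝ, K2 v = v.1 * m + v.2 * w := fun v => by
    have h1 : K2 (1,0) = m := hsymm (1,0) (0,1)
    rw [two_decomp K2 v, h1]
    rfl
  set A : (ℝ×ℝ) →L[ℝ] ℝ×ℝ := K1.prod (ContinuousLinearMap.snd ℝ ℝ ℝ) with hA_def
  set B : (ℝ×ℝ) →L[ℝ] ℝ×ℝ :=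
    (c⁻¹ • (ContinuousLinearMap.fst ℝ ℝ ℝ - m • ContinuousLinearMap.snd ℝ ℝ ℝ)).prod
      (ContinuousLinearMap.snd ℝ ℝ ℝ) with hB_def
  have hAv : ∀ v : ℝ×ℝ, A v = (v.1 * c + v.2 * m, v.2) := fun v => by
    simp [hA_def, hK1v v, ContinuousLinearMap.prod_apply]
  have hBv : ∀ v : ℝ×ℝ, B v = (c⁻¹ * (v.1 - m * v.2), v.2) := fun v => by
    simp [hB_def, ContinuousLinearMap.prod_apply, ContinuousLinearMap.smul_apply,
      ContinuousLinearMap.sub_apply, smul_eq_mul]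
  have hBA : Function.LeftInverse B A := fun v => by
    rw [hAv, hBv]
    refine Prod.ext ?_ rfl
    field_simp
    ring
  have hAB : Function.RightInverse B A := fun v => by
    rw [hBv, hAv]
    refine Prod.ext ?_ rfl
    field_simp
    ring
  set Aeq : (ℝ×ℝ) ≃L[ℝ] ℝ×ℝ := ContinuousLinearEquiv.equivOfInverse A B hBA hAB with hAeq_def
  set P : ℝ×ℝ → ℝ×ℝ := fun p => (fderiv ℝ u p ((1:ℝ),(0:ℝ)), p.2) with hP_def
  have hP0 : HasFDerivAt P A p₀ := hfd.prodMk (hasFDerivAt_snd)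
  have hP : HasFDerivAt P (Aeq : (ℝ×ℝ) →L[ℝ] ℝ×ℝ) p₀ := hP0
  have hfc : ContDiffAt ℝ 1 (fun p => fderiv ℝ u p ((1:ℝ),(0:ℝ))) p₀ :=
    L1.contDiff.comp_contDiffAt p₀ (hu2.fderiv_right (by norm_num))
  have hPc : ContDiffAt ℝ 1 P p₀ := hfc.prodMk contDiffAt_snd
  have hn : (1 : WithTop ℕ∞) ≠ 0 := one_ne_zero
  have hS : HasStrictFDerivAt P (Aeq : (ℝ×ℝ) →L[ℝ] ℝ×ℝ) p₀ := hPc.hasStrictFDerivAt' hP hn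
  set g : ℝ×ℝ → ℝ×ℝ := hS.localInverse P Aeq p₀ with hg_def
  set q₀ : ℝ×ℝ := P p₀ with hq₀_def
  have hgq : g q₀ = p₀ := hS.localInverse_apply_image
  have hgstrict : HasStrictFDerivAt g (Aeq.symm : (ℝ×ℝ) →L[ℝ] ℝ×ℝ) q₀ := hS.to_localInverse
  have hgc : ContDiffAt ℝ 1 g q₀ := hPc.to_localInverse hP hn
  have hginv : ∀ᶠ q in nhds q₀, P (g q) = q := hS.eventually_right_inverse
  have hgdiff_ev : ∀ᶠ q in nhds q₀, DifferentiableAt ℝ g q := by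
    filter_upwards [hgc.eventually (by norm_num)] with q hq
    exact hq.differentiableAt one_ne_zero
  have hgΩ : ∀ᶠ q in nhds q₀, g q ∈ Ω :=
    hgc.continuousAt.preimage_mem_nhds (by rwa [hgq])
  have hprops : ∀ᶠ q in nhds q₀, P (g q) = q ∧ g q ∈ Ω ∧ DifferentiableAt ℝ g q :=
    hginv.and (hgΩ.and hgdiff_ev)
  -- key first-derivative formulas for ustar near q₀
  have hkey : ∀ᶠ q in nhds q₀,
      fderiv ℝ ustar q ((1:ℝ),(0:ℝ)) = (g q).1 ∧
      fderiv ℝ ustar q ((0:ℝ),(1:ℝ)) = -(fderiv ℝ u (g q) ((0:ℝ),(1:ℝ))) := by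
    filter_upwards [hprops, hprops.eventually_nhds] with q hq hq_nhds
    obtain ⟨hq1, hq2, hq3⟩ := hq
    have hustar_ev : ustar =ᶠ[nhds q] fun r => (g r).1 * r.1 - u (g r) := by
      filter_upwards [hq_nhds] with r hr
      obtain ⟨hr1, hr2, hr3⟩ := hr
      have hs := hstar (g r) hr2
      have h1 : pdx u (g r) = r.1 := (Prod.ext_iff.1 hr1).1
      have h2 : (g r).2 = r.2 := (Prod.ext_iff.1 hr1).2
      rw [h1, h2] at hs
      rw [Prod.mk.eta] at hs
      exact hs
    have hgd' : HasFDerivAt g (fderiv ℝ g q) q := hq3.hasFDerivAt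
    set D : (ℝ×ℝ) →L[ℝ] ℝ×ℝ := fderiv ℝ g q with hD_def
    have huΩ : ContDiffAt ℝ 2 u (g q) := hu.contDiffAt (hΩ.mem_nhds hq2)
    have hud : HasFDerivAt u (fderiv ℝ u (g q)) (g q) :=
      (huΩ.differentiableAt (by norm_num)).hasFDerivAt
    set Du : (ℝ×ℝ) →L[ℝ] ℝ := fderiv ℝ u (g q) with hDu_def
    have hD2 : ∀ v : ℝ×ℝ, (D v).2 = v.2 := by
      have e1 : HasFDerivAt (fun r => (g r).2)
          ((ContinuousLinearMap.snd ℝ ℝ ℝ).comp D) q :=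
        (ContinuousLinearMap.snd ℝ ℝ ℝ).hasFDerivAt.comp q hgd'
      have e2 : HasFDerivAt (fun r : ℝ×ℝ => r.2)
          ((ContinuousLinearMap.snd ℝ ℝ ℝ).comp D) q := by
        apply e1.congr_of_eventuallyEq
        filter_upwards [hq_nhds] with r hr
        exact ((Prod.ext_iff.1 hr.1).2).symm
      have e3 := e2.unique hasFDerivAt_snd
      intro v
      have := congrArg (fun (T : (ℝ×ℝ) →L[ℝ] ℝ) => T v) e3
      simpa using this
    have hDu1 : Du ((1:ℝ),(0:ℝ)) = q.1 := (Prod.ext_iff.1 hq1).1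
    have hA1 : HasFDerivAt (fun r => (g r).1)
        ((ContinuousLinearMap.fst ℝ ℝ ℝ).comp D) q :=
      (ContinuousLinearMap.fst ℝ ℝ ℝ).hasFDerivAt.comp q hgd'
    have hB1 : HasFDerivAt (fun r : ℝ×ℝ => r.1) (ContinuousLinearMap.fst ℝ ℝ ℝ) q :=
      hasFDerivAt_fst
    have hAB1 := hA1.mul hB1
    have hC1 : HasFDerivAt (fun r => u (g r)) (Du.comp D) q := hud.comp q hgd'
    have hV := hAB1.sub hC1
    have hfu : fderiv ℝ ustar q =
        ((fun r => (g r).1) q • ContinuousLinearMap.fst ℝ ℝ ℝ +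
          (fun r : ℝ×ℝ => r.1) q • ((ContinuousLinearMap.fst ℝ ℝ ℝ).comp D)) - Du.comp D := by
      rw [hustar_ev.fderiv_eq]
      exact hV.fderiv
    constructor
    · rw [hfu]
      have hdec := two_decomp Du (D (1,0))
      rw [hDu1] at hdec
      simp only [ContinuousLinearMap.sub_apply, ContinuousLinearMap.add_apply,
        ContinuousLinearMap.smul_apply, ContinuousLinearMap.comp_apply,
        ContinuousLinearMap.coe_fst', smul_eq_mul]
      rw [hdec, hD2 (1,0)]
      simp
      ring
    · rw [hfu]
      have hdec := two_decomp Du (D (0,1))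
      rw [hDu1] at hdec
      simp only [ContinuousLinearMap.sub_apply, ContinuousLinearMap.add_apply,
        ContinuousLinearMap.smul_apply, ContinuousLinearMap.comp_apply,
        ContinuousLinearMap.coe_fst', smul_eq_mul]
      rw [hdec, hD2 (0,1)]
      simp
      ring
  have hev1 : (fun q => fderiv ℝ ustar q ((1:ℝ),(0:ℝ))) =ᶠ[nhds q₀] fun q => (g q).1 :=
    hkey.mono fun q hq => hq.1
  have hev2 : (fun q => fderiv ℝ ustar q ((0:ℝ),(1:ℝ))) =ᶠ[nhds q₀]
      fun q => -(fderiv ℝ u (g q) ((0:ℝ),(1:ℝ))) :=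
    hkey.mono fun q hq => hq.2
  -- symm coe
  have hsymmv : ∀ v : ℝ×ℝ, (Aeq.symm : (ℝ×ℝ) →L[ℝ] ℝ×ℝ) v = B v := fun v => by
    rw [hAeq_def, ContinuousLinearEquiv.symm_equivOfInverse]
    rfl
  -- second derivatives of ustar at q₀
  have hstarxx : pdx (pdx ustar) q₀ = c⁻¹ := by
    show fderiv ℝ (fun q => fderiv ℝ ustar q ((1:ℝ),(0:ℝ))) q₀ (1,0) = c⁻¹
    rw [hev1.fderiv_eq]
    have hfst : HasFDerivAt (fun q => (g q).1)
        ((ContinuousLinearMap.fst ℝ ℝ ℝ).comp (Aeq.symm : (ℝ×ℝ) →L[ℝ] ℝ×ℝ)) q₀ :=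
      (ContinuousLinearMap.fst ℝ ℝ ℝ).hasFDerivAt.comp q₀ hgstrict.hasFDerivAt
    rw [hfst.fderiv]
    simp only [ContinuousLinearMap.comp_apply, ContinuousLinearMap.coe_fst']
    rw [hsymmv, hBv]
    simp
  have hstaryy : pdy (pdy ustar) q₀ = c⁻¹ * m * m - w := by
    show fderiv ℝ (fun q => fderiv ℝ ustar q ((0:ℝ),(1:ℝ))) q₀ (0,1) = c⁻¹ * m * m - w
    rw [hev2.fderiv_eq]
    have h1 : HasFDerivAt (fun p => fderiv ℝ u p ((0:ℝ),(1:ℝ))) K2 (g q₀) := by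
      rw [hgq]; exact hgd
    have h2 : HasFDerivAt (fun q => fderiv ℝ u (g q) ((0:ℝ),(1:ℝ)))
        (K2.comp (Aeq.symm : (ℝ×ℝ) →L[ℝ] ℝ×ℝ)) q₀ :=
      h1.comp q₀ hgstrict.hasFDerivAt
    have h3 : HasFDerivAt (fun q => -(fderiv ℝ u (g q) ((0:ℝ),(1:ℝ))))
        (-(K2.comp (Aeq.symm : (ℝ×ℝ) →L[ℝ] ℝ×ℝ))) q₀ := h2.neg
    rw [h3.fderiv]
    simp only [ContinuousLinearMap.neg_apply, ContinuousLinearMap.comp_apply]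
    rw [hsymmv, hBv, hK2v]
    simp
    field_simp
    ring
  -- conclude
  show (a + b * p₀.2)^α * pdx (pdx ustar) q₀ + pdy (pdy ustar) q₀ = 0
  rw [hstarxx, hstaryy, ← hdet]
  field_simp
  ring
end

section
/- Let a ≥ 0, b > 0 and α > −2, and set l = (2/(b(α+2))) a^{(α+2)/2} and f(x₂) = b^{−α/(α+2)} ((α+2)/2 · x₂)^{2/(α+2)} − a/b for x₂ > l. If v ∈ C²(ℝ × (0,∞)) satisfies (a + b η)^α v_{ξξ} + v_{ηη} = 0 in ℝ × (0,∞), then the function ṽ(x₁, x₂) := v(x₁, f(x₂)) satisfies ṽ_{11} + ṽ_{22} + (α/(α+2)) x₂^{−1} ṽ_2 = 0 in ℝ × (l, ∞), equivalently div( x₂^{α/(α+2)} ∇ṽ ) = 0 in ℝ × (l, ∞). -/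
open Real

/-- Change of variables for the Grushin-type equation: if `v` satisfies
`(a + b η)^α v_{ξξ} + v_{ηη} = 0` in `ℝ × (0,∞)`, then
`ṽ(x₁,x₂) = v(x₁, f(x₂))`, with
`f(x₂) = b^{-α/(α+2)} ((α+2)/2 · x₂)^{2/(α+2)} - a/b`, satisfies
`ṽ_{11} + ṽ_{22} + (α/(α+2)) x₂⁻¹ ṽ_2 = 0` in `ℝ × (l,∞)`, where
`l = (2/(b(α+2))) a^{(α+2)/2}`. -/
theorem grushin_change_of_variables
    (a b α : ℝ) (ha : 0 ≤ a) (hb : 0 < b) (hα : -2 < α)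
    (v vt : ℝ × ℝ → ℝ)
    (hv : ContDiffOn ℝ 2 v {p : ℝ × ℝ | 0 < p.2})
    (heq : ∀ p : ℝ × ℝ, 0 < p.2 →
      (a + b * p.2) ^ α * pdx (pdx v) p + pdy (pdy v) p = 0)
    (hvt : ∀ q : ℝ × ℝ, 2 / (b * (α + 2)) * a ^ ((α + 2) / 2) < q.2 →
      vt q = v (q.1, b ^ (-α / (α + 2)) * ((α + 2) / 2 * q.2) ^ (2 / (α + 2)) - a / b)) :
    ∀ p : ℝ × ℝ, 2 / (b * (α + 2)) * a ^ ((α + 2) / 2) < p.2 →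
      pdx (pdx vt) p + pdy (pdy vt) p + α / (α + 2) * (p.2)⁻¹ * pdy vt p = 0 := by
  have hk : (0:ℝ) < α + 2 := by linarith
  set l : ℝ := 2 / (b * (α + 2)) * a ^ ((α + 2) / 2) with hldef
  have hl0 : 0 ≤ l := by
    have : (0:ℝ) ≤ a ^ ((α + 2) / 2) := Real.rpow_nonneg ha _
    positivity
  set c : ℝ := 2 / (α + 2) with hcdef
  have hc0 : 0 < c := by positivity
  have hck : c * ((α + 2) / 2) = 1 := by rw [hcdef]; field_simp
  have hce : -α / (α + 2) = c - 1 := by rw [hcdef]; field_simp; ring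
  set w : ℝ → ℝ := fun x => b * ((α + 2) / 2 * x) with hwdef
  set g : ℝ → ℝ := fun x => w x ^ c / b - a / b with hgdef
  set g' : ℝ → ℝ := fun x => w x ^ (c - 1) with hg'def
  set g'' : ℝ → ℝ := fun x => (b * ((α + 2) / 2)) * ((c - 1) * w x ^ (c - 2)) with hg''def
  -- positivity of w on (l,∞)
  have hwpos : ∀ x : ℝ, l < x → 0 < w x := by
    intro x hx
    have hx0 : 0 < x := lt_of_le_of_lt hl0 hx
    simp only [hwdef]
    positivity
  -- the original formula equals g
  have hgf : ∀ x : ℝ, l < x →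
      b ^ (-α / (α + 2)) * ((α + 2) / 2 * x) ^ c - a / b = g x := by
    intro x hx
    have hx0 : 0 < x := lt_of_le_of_lt hl0 hx
    have hy0 : (0:ℝ) ≤ (α + 2) / 2 * x := by positivity
    have h1 : w x ^ c = b ^ c * ((α + 2) / 2 * x) ^ c :=
      Real.mul_rpow hb.le hy0
    have h2 : b ^ (-α / (α + 2)) = b ^ c / b := by
      rw [hce, Real.rpow_sub hb, Real.rpow_one]
    simp only [hgdef, h1, h2]
    ring
  have hvtF : ∀ q : ℝ × ℝ, l < q.2 → vt q = v (q.1, g q.2) := by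
    intro q hq
    rw [hvt q hq, hgf q.2 hq]
  -- positivity of g on (l,∞)
  have hgpos : ∀ x : ℝ, l < x → 0 < g x := by
    intro x hx
    have hwx := hwpos x hx
    have hwl : a ^ ((α + 2) / 2) < w x := by
      have hwl' : w l = a ^ ((α + 2) / 2) := by
        simp only [hwdef, hldef]
        field_simp
      rw [← hwl']
      simp only [hwdef]
      have : (0:ℝ) < b * ((α + 2) / 2) := by positivity
      nlinarith
    have h1 : (a ^ ((α + 2) / 2)) ^ c = a := by
      rw [← Real.rpow_mul ha, show (α + 2) / 2 * c = 1 by rw [hcdef]; field_simp,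
        Real.rpow_one]
    have key : a < w x ^ c := by
      calc a = (a ^ ((α + 2) / 2)) ^ c := h1.symm
      _ < w x ^ c := Real.rpow_lt_rpow (Real.rpow_nonneg ha _) hwl hc0
    have hnum : 0 < w x ^ c - a := by linarith
    simp only [hgdef]
    rw [div_sub_div_same]
    exact div_pos hnum hb
  -- derivatives of g
  have hwD : ∀ x : ℝ, HasDerivAt w (b * ((α + 2) / 2)) x := by
    intro x
    simpa using ((hasDerivAt_id x).const_mul ((α + 2) / 2)).const_mul b
  have hgd : ∀ x : ℝ, l < x → HasDerivAt g (g' x) x := by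
    intro x hx
    have hwx := hwpos x hx
    have h1 : HasDerivAt (fun y => w y ^ c)
        ((b * ((α + 2) / 2)) * c * w x ^ (c - 1)) x :=
      (hwD x).rpow_const (Or.inl hwx.ne')
    have h2 := (h1.div_const b).sub_const (a / b)
    have hbc : b * ((α + 2) / 2) * c = b := by
      rw [mul_assoc, mul_comm ((α + 2) / 2) c, hck, mul_one]
    refine h2.congr_deriv ?_
    rw [hbc, mul_comm b (w x ^ (c - 1)), mul_div_assoc, div_self hb.ne', mul_one]
  have hgd2 : ∀ x : ℝ, l < x → HasDerivAt g' (g'' x) x := by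
    intro x hx
    have hwx := hwpos x hx
    have h1 : HasDerivAt (fun y => w y ^ (c - 1))
        ((b * ((α + 2) / 2)) * (c - 1) * w x ^ (c - 1 - 1)) x :=
      (hwD x).rpow_const (Or.inl hwx.ne')
    convert h1 using 1
    rw [show c - 1 - 1 = c - 2 by ring]
    simp only [hg''def]
    ring
  -- open sets
  have hUopen : IsOpen {q : ℝ × ℝ | l < q.2} := isOpen_lt continuous_const continuous_snd
  have hVopen : IsOpen {q : ℝ × ℝ | 0 < q.2} := isOpen_lt continuous_const continuous_snd
  -- derivative of F
  set F : ℝ × ℝ → ℝ × ℝ := fun q => (q.1, g q.2) with hFdef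
  set L : ℝ × ℝ → (ℝ × ℝ →L[ℝ] ℝ × ℝ) := fun q =>
    (ContinuousLinearMap.fst ℝ ℝ ℝ).prod
      (((1 : ℝ →L[ℝ] ℝ).smulRight (g' q.2)).comp (ContinuousLinearMap.snd ℝ ℝ ℝ))
    with hLdef
  have hLx : ∀ q : ℝ × ℝ, L q (1, 0) = (1, 0) := by
    intro q; simp [hLdef]
  have hLy : ∀ q : ℝ × ℝ, L q (0, 1) = (0, g' q.2) := by
    intro q; simp [hLdef]
  have hFd : ∀ q : ℝ × ℝ, l < q.2 → HasFDerivAt F (L q) q := by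
    intro q hq
    exact HasFDerivAt.prodMk (hasFDerivAt_fst)
      (((hgd q.2 hq).hasFDerivAt).comp q (hasFDerivAt_snd))
  have hFmem : ∀ q : ℝ × ℝ, l < q.2 → 0 < (F q).2 := fun q hq => hgpos q.2 hq
  -- v is differentiable at F q
  have hvd : ∀ q : ℝ × ℝ, l < q.2 → DifferentiableAt ℝ v (F q) := by
    intro q hq
    exact (hv.contDiffAt (hVopen.mem_nhds (hFmem q hq))).differentiableAt (by norm_num)
  -- eventual equality
  have hev : ∀ q : ℝ × ℝ, l < q.2 → vt =ᶠ[nhds q] fun r => v (F r) := by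
    intro q hq
    filter_upwards [hUopen.mem_nhds hq] with r hr
    exact hvtF r hr
  -- first derivatives of vt on U
  have hvt1 : ∀ q : ℝ × ℝ, l < q.2 →
      HasFDerivAt vt ((fderiv ℝ v (F q)).comp (L q)) q := by
    intro q hq
    exact (((hvd q hq).hasFDerivAt).comp q (hFd q hq)).congr_of_eventuallyEq (hev q hq)
  have hpdx : ∀ q : ℝ × ℝ, l < q.2 → pdx vt q = pdx v (F q) := by
    intro q hq
    have hfd := (hvt1 q hq).fderiv
    simp only [pdx, hfd, ContinuousLinearMap.comp_apply, hLx]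
  have hpdy : ∀ q : ℝ × ℝ, l < q.2 → pdy vt q = g' q.2 * pdy v (F q) := by
    intro q hq
    have hfd := (hvt1 q hq).fderiv
    simp only [pdy, hfd, ContinuousLinearMap.comp_apply, hLy]
    rw [show ((0:ℝ), g' q.2) = g' q.2 • ((0:ℝ), (1:ℝ)) by simp,
      (fderiv ℝ v (F q)).map_smul, smul_eq_mul]
  -- now the main computation at p
  intro p hp
  have hx0 : 0 < p.2 := lt_of_le_of_lt hl0 hp
  set r : ℝ × ℝ := F p with hrdef
  have hr : 0 < r.2 := hFmem p hp
  set D : ℝ × ℝ →L[ℝ] (ℝ × ℝ →L[ℝ] ℝ) := fderiv ℝ (fderiv ℝ v) r with hDdef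
  have hD : HasFDerivAt (fderiv ℝ v) D r :=
    (((hv.contDiffAt (hVopen.mem_nhds hr)).fderiv_right (m := 1)
      (by norm_num)).differentiableAt one_ne_zero).hasFDerivAt
  -- second derivatives of v
  have hAv : HasFDerivAt (pdx v)
      ((ContinuousLinearMap.apply ℝ ℝ ((1:ℝ),(0:ℝ))).comp D) r :=
    ((ContinuousLinearMap.apply ℝ ℝ ((1:ℝ),(0:ℝ))).hasFDerivAt).comp r hD
  have hBv : HasFDerivAt (pdy v)
      ((ContinuousLinearMap.apply ℝ ℝ ((0:ℝ),(1:ℝ))).comp D) r :=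
    ((ContinuousLinearMap.apply ℝ ℝ ((0:ℝ),(1:ℝ))).hasFDerivAt).comp r hD
  have hA : pdx (pdx v) r = D (1, 0) (1, 0) := by
    simp [pdx, hAv.fderiv]
  have hC : pdy (pdy v) r = D (0, 1) (0, 1) := by
    simp [pdy, hBv.fderiv]
  -- pdx (pdx vt)
  have hevx : pdx vt =ᶠ[nhds p] fun q => pdx v (F q) := by
    filter_upwards [hUopen.mem_nhds hp] with q hq
    exact hpdx q hq
  have h11 : pdx (pdx vt) p = D (1, 0) (1, 0) := by
    have h := (hAv.comp p (hFd p hp)).congr_of_eventuallyEq hevx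
    simp [pdx, h.fderiv, hLx]
  -- pdy (pdy vt)
  have hevy : pdy vt =ᶠ[nhds p] fun q => g' q.2 * pdy v (F q) := by
    filter_upwards [hUopen.mem_nhds hp] with q hq
    exact hpdy q hq
  have hg'F : HasFDerivAt (fun q : ℝ × ℝ => g' q.2)
      (((1 : ℝ →L[ℝ] ℝ).smulRight (g'' p.2)).comp (ContinuousLinearMap.snd ℝ ℝ ℝ)) p :=
    ((hgd2 p.2 hp).hasFDerivAt).comp p (hasFDerivAt_snd)
  have hpdyvF : HasFDerivAt (fun q => pdy v (F q))
      (((ContinuousLinearMap.apply ℝ ℝ ((0:ℝ),(1:ℝ))).comp D).comp (L p)) p :=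
    by have h := hBv.comp p (hFd p hp); exact h
  have hN : (((ContinuousLinearMap.apply ℝ ℝ ((0:ℝ),(1:ℝ))).comp D).comp (L p)) (0, 1)
      = g' p.2 * D (0, 1) (0, 1) := by
    rw [ContinuousLinearMap.comp_apply, ContinuousLinearMap.comp_apply, hLy,
      ContinuousLinearMap.apply_apply,
      show ((0:ℝ), g' p.2) = g' p.2 • ((0:ℝ), (1:ℝ)) by simp,
      D.map_smul]
    simp
  have h22 : pdy (pdy vt) p
      = g' p.2 * (g' p.2 * D (0, 1) (0, 1)) + pdy v r * g'' p.2 := by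
    have h := (hg'F.mul hpdyvF).congr_of_eventuallyEq hevy
    rw [pdy, h.fderiv, ContinuousLinearMap.add_apply, ContinuousLinearMap.smul_apply,
      ContinuousLinearMap.smul_apply, hN, smul_eq_mul, smul_eq_mul]
    simp
    exact Or.inl rfl
  -- the PDE at r
  have heqr := heq r hr
  rw [hA, hC] at heqr
  -- identity (i)
  have hw2 := hwpos p.2 hp
  have hi : g'' p.2 + α / (α + 2) * (p.2)⁻¹ * g' p.2 = 0 := by
    have hwe : w p.2 ^ (c - 2) * w p.2 = w p.2 ^ (c - 1) := by
      rw [← Real.rpow_add_one hw2.ne' (c - 2), show c - 2 + 1 = c - 1 by ring]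
    have hbw : b * ((α + 2) / 2) = w p.2 * (p.2)⁻¹ := by
      simp only [hwdef]
      field_simp
    have h3 : g'' p.2 = (c - 1) * (p.2)⁻¹ * g' p.2 := by
      simp only [hg''def, hg'def]
      rw [← hwe, hbw]
      ring
    rw [h3, ← hce]
    ring
  -- identity (ii)
  have hr2 : a + b * r.2 = w p.2 ^ c := by
    show a + b * g p.2 = _
    simp only [hgdef]
    field_simp
    ring
  have hii : g' p.2 * g' p.2 * (a + b * r.2) ^ α = 1 := by
    rw [hr2]
    simp only [hg'def]
    rw [← Real.rpow_mul hw2.le, ← Real.rpow_add hw2, ← Real.rpow_add hw2,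
      show c - 1 + (c - 1) + c * α = 0 by linear_combination 2 * hck]
    exact Real.rpow_zero _
  rw [h11, h22, hpdy p hp]
  linear_combination (pdy v r) * hi + (g' p.2 * g' p.2) * heqr - (D (1, 0) (1, 0)) * hii
end
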